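/- Define σ: [0,∞) → [0,∞) by σ(t) = 0 for t ∈ [0, t_1) and σ(t) = n log t − Σ_{k=1}^n log t_k for t ∈ [t_n, t_{n+1}), where (t_n) is a sequence of positive reals with t_1 = e, t_{n+1} ≥ 2 t_n, and log t_{n+1} ≥ max_{1≤k≤n} 2^{n+1−k} log t_k for all n. Then σ is increasing, σ(2t) = O(σ(t)), and log t = o(σ(t)) as t → ∞. -/

import Mathlib

open Filter Asymptotics

/-- The explicit piecewise-logarithmic construction from a rapidly growing
sequence `(t_n)` yields a weight function: increasing with σ(2t) = O(σ(t)) and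
log t = o(σ(t)). -/
theorem stmt4 (t : ℕ → ℝ) (ht : ∀ n, 0 < t n) (h1 : t 1 = Real.exp 1)
    (hgrow : ∀ n ≥ 1, 2 * t n ≤ t (n + 1))
    (hlog : ∀ n ≥ 1, ∀ k, 1 ≤ k → k ≤ n →
      (2 : ℝ) ^ (n + 1 - k) * Real.log (t k) ≤ Real.log (t (n + 1)))
    (σ : ℝ → ℝ)
    (hσ0 : ∀ x, 0 ≤ x → x < t 1 → σ x = 0)
    (hσn : ∀ n ≥ 1, ∀ x, t n ≤ x → x < t (n + 1) →
      σ x = n * Real.log x - ∑ k ∈ Finset.Icc 1 n, Real.log (t k)) :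
    MonotoneOn σ (Set.Ici 0) ∧ (fun x => σ (2 * x)) =O[atTop] σ ∧
      (fun x => Real.log x) =o[atTop] σ := by
  -- step monotonicity of t
  have hstep : ∀ n, 1 ≤ n → t n ≤ t (n + 1) := by
    intro n hn
    have := hgrow n hn
    nlinarith [ht n]
  have htmono : ∀ n m, 1 ≤ n → n ≤ m → t n ≤ t m := by
    intro n m hn hnm
    induction m with
    | zero => omega
    | succ m ih =>
      rcases Nat.lt_or_ge n (m + 1) with h | h
      · exact le_trans (ih (by omega)) (hstep m (by omega))
      · have : n = m + 1 := by omega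
        subst this; rfl
  -- doubling of logs
  have hlog2 : ∀ n, 1 ≤ n → 2 * Real.log (t n) ≤ Real.log (t (n + 1)) := by
    intro n hn
    have := hlog n hn n hn le_rfl
    have he : n + 1 - n = 1 := by omega
    rwa [he, pow_one] at this
  have hlogt1 : ∀ n, 1 ≤ n → 1 ≤ Real.log (t n) := by
    intro n hn
    induction n with
    | zero => omega
    | succ n ih =>
      rcases Nat.lt_or_ge n 1 with h | h
      · have : n + 1 = 1 := by omega
        rw [this, h1, Real.log_exp]
      · have := hlog2 n h
        have := ih h
        linarith
  have hlogmono : ∀ n m, 1 ≤ n → n ≤ m → Real.log (t n) ≤ Real.log (t m) := by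
    intro n m hn hnm
    exact Real.log_le_log (ht n) (htmono n m hn hnm)
  have hpow : ∀ n, 1 ≤ n → (2 : ℝ) ^ (n - 1) ≤ Real.log (t n) := by
    intro n hn
    induction n with
    | zero => omega
    | succ n ih =>
      rcases Nat.lt_or_ge n 1 with h | h
      · have hn1 : n + 1 = 1 := by omega
        rw [hn1, h1, Real.log_exp]; norm_num
      · have h2 := hlog2 n h
        have h3 := ih h
        have he : n + 1 - 1 = (n - 1) + 1 := by omega
        rw [he, pow_succ]
        linarith
  -- every x ≥ t 1 is in some interval
  have hcoverN : ∀ N : ℕ, ∀ x, t 1 ≤ x → x < t (N + 1) →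
      ∃ n, 1 ≤ n ∧ t n ≤ x ∧ x < t (n + 1) := by
    intro N
    induction N with
    | zero => intro x hx hx'; linarith
    | succ N ih =>
      intro x hx hx'
      rcases lt_or_ge x (t (N + 1)) with h | h
      · exact ih x hx h
      · exact ⟨N + 1, by omega, h, hx'⟩
  have hcover : ∀ x, t 1 ≤ x → ∃ n, 1 ≤ n ∧ t n ≤ x ∧ x < t (n + 1) := by
    intro x hx
    obtain ⟨N, hN⟩ := pow_unbounded_of_one_lt (Real.log x) (by norm_num : (1 : ℝ) < 2)
    have h2 : (2 : ℝ) ^ N ≤ Real.log (t (N + 1)) := by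
      have := hpow (N + 1) (by omega)
      simpa using this
    have hxpos : 0 < x := lt_of_lt_of_le (ht 1) hx
    have hxlt : x < t (N + 1) :=
      (Real.log_lt_log_iff hxpos (ht (N + 1))).mp (lt_of_lt_of_le hN h2)
    exact hcoverN N x hx hxlt
  -- sum bounds
  have hS2 : ∀ n, 1 ≤ n →
      (∑ k ∈ Finset.Icc 1 n, Real.log (t k)) ≤ 2 * Real.log (t n) := by
    intro n hn
    induction n with
    | zero => omega
    | succ n ih =>
      rcases Nat.lt_or_ge n 1 with h | h
      · have hn1 : n + 1 = 1 := by omega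
        rw [hn1]
        simp [h1, Real.log_exp]
      · rw [Finset.sum_Icc_succ_top (by omega : 1 ≤ n + 1)]
        have := ih h
        have := hlog2 n h
        linarith
  have hSn : ∀ n, 1 ≤ n →
      (∑ k ∈ Finset.Icc 1 n, Real.log (t k)) ≤ (n : ℝ) * Real.log (t n) := by
    intro n hn
    have h := Finset.sum_le_card_nsmul (Finset.Icc 1 n)
      (fun k => Real.log (t k)) (Real.log (t n))
      (fun k hk => by
        simp only [Finset.mem_Icc] at hk
        exact hlogmono k n hk.1 hk.2)
    rw [Nat.card_Icc] at h
    have he : n + 1 - 1 = n := by omega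
    rw [he, nsmul_eq_mul] at h
    exact h
  have hSpos : ∀ n, 1 ≤ n → 0 ≤ ∑ k ∈ Finset.Icc 1 n, Real.log (t k) := by
    intro n hn
    apply Finset.sum_nonneg
    intro k hk
    simp only [Finset.mem_Icc] at hk
    linarith [hlogt1 k hk.1]
  -- nonnegativity of σ
  have hnonneg : ∀ x, 0 ≤ x → 0 ≤ σ x := by
    intro x hx
    rcases lt_or_ge x (t 1) with h | h
    · rw [hσ0 x hx h]
    · obtain ⟨n, hn1, hnl, hnu⟩ := hcover x h
      rw [hσn n hn1 x hnl hnu]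
      have h2 := hSn n hn1
      have h3 : Real.log (t n) ≤ Real.log x := Real.log_le_log (ht n) hnl
      nlinarith [Nat.cast_nonneg (α := ℝ) n]
  -- lower bound on each interval
  have hlb : ∀ n, 1 ≤ n → ∀ x, t n ≤ x → x < t (n + 1) →
      ((n : ℝ) - 2) * Real.log x ≤ σ x := by
    intro n hn x hxl hxu
    rw [hσn n hn x hxl hxu]
    have h2 := hS2 n hn
    have h3 : Real.log (t n) ≤ Real.log x := Real.log_le_log (ht n) hxl
    linarith
  -- key comparison for monotonicity
  have hkey : ∀ n m, 1 ≤ n → n ≤ m → ∀ b, t m ≤ b →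
      (n : ℝ) * Real.log b - (∑ k ∈ Finset.Icc 1 n, Real.log (t k)) ≤
      (m : ℝ) * Real.log b - (∑ k ∈ Finset.Icc 1 m, Real.log (t k)) := by
    intro n m hn hnm b hb
    have hsplit : (∑ k ∈ Finset.Ioc 0 n, Real.log (t k)) +
        (∑ k ∈ Finset.Ioc n m, Real.log (t k)) =
        ∑ k ∈ Finset.Ioc 0 m, Real.log (t k) :=
      Finset.sum_Ioc_consecutive _ (Nat.zero_le n) hnm
    have hIcc : ∀ j : ℕ, Finset.Icc 1 j = Finset.Ioc 0 j := by
      intro j; ext k; simp [Nat.lt_iff_add_one_le]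
    have hub : (∑ k ∈ Finset.Ioc n m, Real.log (t k)) ≤
        ((m - n : ℕ) : ℝ) * Real.log b := by
      have h := Finset.sum_le_card_nsmul (Finset.Ioc n m)
        (fun k => Real.log (t k)) (Real.log b)
        (fun k hk => by
          simp only [Finset.mem_Ioc] at hk
          exact le_trans (hlogmono k m (by omega) hk.2) (Real.log_le_log (ht m) hb))
      rwa [Nat.card_Ioc, nsmul_eq_mul] at h
    rw [hIcc n, hIcc m]
    have hc : ((m - n : ℕ) : ℝ) = (m : ℝ) - (n : ℝ) := by
      push_cast [Nat.cast_sub hnm]; ring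
    rw [hc] at hub
    linarith
  refine ⟨?_, ?_, ?_⟩
  · -- Monotone
    intro a ha b hb hab
    simp only [Set.mem_Ici] at ha hb
    rcases lt_or_ge b (t 1) with h | h
    · rw [hσ0 a ha (lt_of_le_of_lt hab h), hσ0 b hb h]
    rcases lt_or_ge a (t 1) with h' | h'
    · rw [hσ0 a ha h']; exact hnonneg b hb
    obtain ⟨n, hn1, hna, hna'⟩ := hcover a h'
    obtain ⟨m, hm1, hmb, hmb'⟩ := hcover b h
    have hnm : n ≤ m := by
      by_contra hc
      push_neg at hc
      have := htmono (m + 1) n (by omega) (by omega)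
      linarith
    rw [hσn n hn1 a hna hna', hσn m hm1 b hmb hmb']
    have hla : Real.log a ≤ Real.log b :=
      Real.log_le_log (lt_of_lt_of_le (ht 1) h') hab
    have h2 := hkey n m hn1 hnm b hmb
    have h3 : (n : ℝ) * Real.log a ≤ (n : ℝ) * Real.log b :=
      mul_le_mul_of_nonneg_left hla (Nat.cast_nonneg n)
    linarith
  · -- Big O
    rw [isBigO_iff]
    refine ⟨8, ?_⟩
    filter_upwards [Filter.eventually_ge_atTop (t 3)] with x hx
    have ht13 : t 1 ≤ t 3 := htmono 1 3 le_rfl (by omega)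
    have hx1 : t 1 ≤ x := le_trans ht13 hx
    have hxpos : 0 < x := lt_of_lt_of_le (ht 1) hx1
    obtain ⟨n, hn1, hnx, hnx'⟩ := hcover x hx1
    have hn3 : 3 ≤ n := by
      by_contra hc
      push_neg at hc
      have := htmono (n + 1) 3 (by omega) (by omega)
      linarith
    have h2x1 : t 1 ≤ 2 * x := by linarith
    obtain ⟨m, hm1, hmx, hmx'⟩ := hcover (2 * x) h2x1
    have hmn : m ≤ n + 1 := by
      by_contra hc
      push_neg at hc
      have h4 : t (n + 2) ≤ t m := htmono (n + 2) m (by omega) (by omega)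
      have h5 : 2 * t (n + 1) ≤ t (n + 2) := hgrow (n + 1) (by omega)
      linarith
    have hlx1 : 1 ≤ Real.log x :=
      le_trans (hlogt1 n hn1) (Real.log_le_log (ht n) hnx)
    have hσ2x : σ (2 * x) ≤ (m : ℝ) * Real.log (2 * x) := by
      rw [hσn m hm1 (2 * x) hmx hmx']
      linarith [hSpos m hm1]
    have hlog2x : Real.log (2 * x) ≤ 2 * Real.log x := by
      rw [Real.log_mul (by norm_num) (ne_of_gt hxpos)]
      have := Real.log_le_sub_one_of_pos (by norm_num : (0 : ℝ) < 2)
      linarith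
    have hlog2xnn : 0 ≤ Real.log (2 * x) := by
      rw [Real.log_mul (by norm_num) (ne_of_gt hxpos)]
      have := Real.log_nonneg (by norm_num : (1 : ℝ) ≤ 2)
      linarith
    have hσx := hlb n hn1 x hnx hnx'
    have hn3' : (3 : ℝ) ≤ (n : ℝ) := by exact_mod_cast hn3
    have hmn' : (m : ℝ) ≤ (n : ℝ) + 1 := by exact_mod_cast hmn
    have hchain : σ (2 * x) ≤ 8 * σ x := by
      have a2 : (m : ℝ) * Real.log (2 * x) ≤ ((n : ℝ) + 1) * Real.log (2 * x) :=
        mul_le_mul_of_nonneg_right hmn' hlog2xnn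
      have a3 : ((n : ℝ) + 1) * Real.log (2 * x) ≤ ((n : ℝ) + 1) * (2 * Real.log x) :=
        mul_le_mul_of_nonneg_left hlog2x (by linarith)
      have a4 : ((n : ℝ) + 1) * (2 * Real.log x) ≤ 8 * (((n : ℝ) - 2) * Real.log x) := by
        nlinarith
      linarith
    have hσxnn : 0 ≤ σ x := hnonneg x (le_of_lt hxpos)
    have hσ2xnn : 0 ≤ σ (2 * x) := hnonneg (2 * x) (by linarith)
    rw [Real.norm_of_nonneg hσ2xnn, Real.norm_of_nonneg hσxnn]
    linarith
  · -- little o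
    rw [isLittleO_iff]
    intro ε hε
    set N : ℕ := ⌈1 / ε⌉₊ + 3 with hN
    filter_upwards [Filter.eventually_ge_atTop (t N)] with x hx
    have hx1 : t 1 ≤ x := le_trans (htmono 1 N le_rfl (by omega)) hx
    have hxpos : 0 < x := lt_of_lt_of_le (ht 1) hx1
    obtain ⟨n, hn1, hnx, hnx'⟩ := hcover x hx1
    have hNn : N ≤ n := by
      by_contra hc
      push_neg at hc
      have := htmono (n + 1) N (by omega) (by omega)
      linarith
    have hlx1 : 1 ≤ Real.log x :=
      le_trans (hlogt1 n hn1) (Real.log_le_log (ht n) hnx)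
    have hσx := hlb n hn1 x hnx hnx'
    have hceil : 1 / ε ≤ ((⌈1 / ε⌉₊ : ℕ) : ℝ) := Nat.le_ceil _
    have hNn' : ((N : ℕ) : ℝ) ≤ (n : ℝ) := by exact_mod_cast hNn
    have hcast : 1 / ε ≤ (n : ℝ) - 2 := by
      have : ((N : ℕ) : ℝ) = ((⌈1 / ε⌉₊ : ℕ) : ℝ) + 3 := by
        rw [hN]; push_cast; ring
      linarith
    have h1 : (1 / ε) * Real.log x ≤ σ x :=
      le_trans (mul_le_mul_of_nonneg_right hcast (by linarith)) hσx
    have hσxnn : 0 ≤ σ x := hnonneg x (le_of_lt hxpos)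
    rw [Real.norm_of_nonneg (by linarith : (0:ℝ) ≤ Real.log x),
      Real.norm_of_nonneg hσxnn]
    calc Real.log x = ε * ((1 / ε) * Real.log x) := by field_simp
      _ ≤ ε * σ x := mul_le_mul_of_nonneg_left h1 (le_of_lt hε)
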